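/- Let n ≥ 1, let G and H be additive abelian groups, and let φ : Gⁿ → H. For x ∈ Gⁿ and 1 ≤ i ≤ n let rᵢ(x) ∈ Gⁿ denote x with its i-th coordinate replaced by −(x₁+⋯+xₙ). If φ is totally symmetric, then Φ := φ + Σᵢ₌₁ⁿ φ∘rᵢ satisfies the generalized anti-hexagon equation n·Φ(x) − Σᵢ₌₁ⁿ Φ(rᵢ(x)) = 0 for all x ∈ Gⁿ. If φ is totally skew-symmetric, then Φ := φ − Σᵢ₌₁ⁿ φ∘rᵢ satisfies n·Φ(x) + Σᵢ₌₁ⁿ Φ(rᵢ(x)) = 0 for all x ∈ Gⁿ. -/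
import Mathlib

open Finset

/-- `replaceCoord i x` is `x` with its `i`-th coordinate replaced by minus the sum of all
coordinates of `x`. -/
def replaceCoord {n : ℕ} {G : Type*} [AddCommGroup G] (i : Fin n) (x : Fin n → G) :
    Fin n → G :=
  Function.update x i (-(∑ j, x j))

lemma replaceCoord_apply_self {n : ℕ} {G : Type*} [AddCommGroup G] (i : Fin n) (x : Fin n → G) :
    replaceCoord i x i = -(∑ j, x j) := Function.update_self ..

lemma replaceCoord_apply_ne {n : ℕ} {G : Type*} [AddCommGroup G] {i k : Fin n} (h : k ≠ i)
    (x : Fin n → G) : replaceCoord i x k = x k := Function.update_of_ne h ..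

lemma sum_replaceCoord {n : ℕ} {G : Type*} [AddCommGroup G] (i : Fin n) (x : Fin n → G) :
    ∑ j, replaceCoord i x j = - x i := by
  unfold replaceCoord
  rw [Finset.sum_update_of_mem (Finset.mem_univ i),
    Finset.sum_sdiff_eq_sub (Finset.subset_univ {i}), Finset.sum_singleton]
  abel

lemma replaceCoord_self {n : ℕ} {G : Type*} [AddCommGroup G] (i : Fin n) (x : Fin n → G) :
    replaceCoord i (replaceCoord i x) = x := by
  funext k
  rcases eq_or_ne k i with rfl | h
  · rw [replaceCoord_apply_self, sum_replaceCoord, neg_neg]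
  · rw [replaceCoord_apply_ne h, replaceCoord_apply_ne h]

lemma replaceCoord_replaceCoord {n : ℕ} {G : Type*} [AddCommGroup G] {i j : Fin n}
    (h : j ≠ i) (x : Fin n → G) :
    replaceCoord j (replaceCoord i x) = replaceCoord j x ∘ Equiv.swap i j := by
  funext k
  simp only [Function.comp_apply]
  rcases eq_or_ne k j with rfl | hkj
  · rw [Equiv.swap_apply_right, replaceCoord_apply_self, sum_replaceCoord,
      replaceCoord_apply_ne h.symm, neg_neg]
  · rcases eq_or_ne k i with rfl | hki
    · rw [Equiv.swap_apply_left, replaceCoord_apply_ne hkj, replaceCoord_apply_self,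
        replaceCoord_apply_self]
    · rw [Equiv.swap_apply_of_ne_of_ne hki hkj, replaceCoord_apply_ne hkj,
        replaceCoord_apply_ne hki, replaceCoord_apply_ne hkj]

/-- If `φ : Gⁿ → H` is totally symmetric then `Φ := φ + Σᵢ φ∘rᵢ` solves the generalized
anti-hexagon equation `n·Φ - Σᵢ Φ∘rᵢ = 0`; if `φ` is totally skew-symmetric then
`Φ := φ - Σᵢ φ∘rᵢ` solves `n·Φ + Σᵢ Φ∘rᵢ = 0`. -/
theorem generalized_anti_hexagon_symmetrization {n : ℕ} (hn : 1 ≤ n)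
    {G H : Type*} [AddCommGroup G] [AddCommGroup H] (φ : (Fin n → G) → H) :
    ((∀ (π : Equiv.Perm (Fin n)) (x : Fin n → G), φ (x ∘ π) = φ x) →
      ∀ x : Fin n → G,
        n • (fun y => φ y + ∑ i, φ (replaceCoord i y)) x -
          ∑ i, (fun y => φ y + ∑ i, φ (replaceCoord i y)) (replaceCoord i x) = 0) ∧
    ((∀ (π : Equiv.Perm (Fin n)) (x : Fin n → G),
        φ (x ∘ π) = (Equiv.Perm.sign π : ℤ) • φ x) →
      ∀ x : Fin n → G,
        n • (fun y => φ y - ∑ i, φ (replaceCoord i y)) x +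
          ∑ i, (fun y => φ y - ∑ i, φ (replaceCoord i y)) (replaceCoord i x) = 0) := by
  constructor
  · intro hsym x
    have key : ∀ i : Fin n, ∑ j, φ (replaceCoord j (replaceCoord i x)) =
        φ x - φ (replaceCoord i x) + ∑ j, φ (replaceCoord j x) := by
      intro i
      have step : ∀ j ∈ univ.erase i, φ (replaceCoord j (replaceCoord i x)) =
          φ (replaceCoord j x) := fun j hj => by
        rw [replaceCoord_replaceCoord (Finset.ne_of_mem_erase hj) x, hsym]
      rw [← Finset.add_sum_erase _ _ (Finset.mem_univ i), replaceCoord_self,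
        Finset.sum_congr rfl step,
        ← Finset.add_sum_erase _ (fun j => φ (replaceCoord j x)) (Finset.mem_univ i)]
      abel
    have total : ∑ i, (φ (replaceCoord i x) + ∑ j, φ (replaceCoord j (replaceCoord i x))) =
        n • (φ x + ∑ j, φ (replaceCoord j x)) := by
      rw [Finset.sum_congr rfl (fun i _ => by rw [key i] :
          ∀ i ∈ univ, φ (replaceCoord i x) + ∑ j, φ (replaceCoord j (replaceCoord i x)) =
            φ (replaceCoord i x) + (φ x - φ (replaceCoord i x) + ∑ j, φ (replaceCoord j x)))]
      rw [Finset.sum_congr rfl (fun i (_ : i ∈ univ) => by abel :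
          ∀ i ∈ univ, φ (replaceCoord i x) + (φ x - φ (replaceCoord i x) +
            ∑ j, φ (replaceCoord j x)) = φ x + ∑ j, φ (replaceCoord j x)),
        Finset.sum_const, Finset.card_univ, Fintype.card_fin]
    simp only
    rw [total, sub_self]
  · intro hskew x
    have key : ∀ i : Fin n, ∑ j, φ (replaceCoord j (replaceCoord i x)) =
        φ x + φ (replaceCoord i x) - ∑ j, φ (replaceCoord j x) := by
      intro i
      have step : ∀ j ∈ univ.erase i, φ (replaceCoord j (replaceCoord i x)) =
          -φ (replaceCoord j x) := fun j hj => by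
        rw [replaceCoord_replaceCoord (Finset.ne_of_mem_erase hj) x, hskew,
          Equiv.Perm.sign_swap (Finset.ne_of_mem_erase hj).symm]
        simp
      rw [← Finset.add_sum_erase _ _ (Finset.mem_univ i), replaceCoord_self,
        Finset.sum_congr rfl step, Finset.sum_neg_distrib,
        ← Finset.add_sum_erase _ (fun j => φ (replaceCoord j x)) (Finset.mem_univ i)]
      abel
    have total : ∑ i, (φ (replaceCoord i x) - ∑ j, φ (replaceCoord j (replaceCoord i x))) =
        -(n • (φ x - ∑ j, φ (replaceCoord j x))) := by
      rw [Finset.sum_congr rfl (fun i _ => by rw [key i] :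
          ∀ i ∈ univ, φ (replaceCoord i x) - ∑ j, φ (replaceCoord j (replaceCoord i x)) =
            φ (replaceCoord i x) - (φ x + φ (replaceCoord i x) - ∑ j, φ (replaceCoord j x)))]
      rw [Finset.sum_congr rfl (fun i (_ : i ∈ univ) => by abel :
          ∀ i ∈ univ, φ (replaceCoord i x) - (φ x + φ (replaceCoord i x) -
            ∑ j, φ (replaceCoord j x)) = -(φ x - ∑ j, φ (replaceCoord j x))),
        Finset.sum_neg_distrib, Finset.sum_const, Finset.card_univ, Fintype.card_fin]
    simp only
    rw [total, add_neg_cancel]
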